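/- Let A be a real n×d matrix, S a real s×n matrix, T a real d×t matrix, ε ≥ 0, and k ≥ 0 an integer. Suppose (i) for every d×d orthogonal projection matrix P with rank(P) ≤ k, ‖A(I−P)‖_F² ≤ ‖SA(I−P)‖_F² ≤ (1+ε)‖A(I−P)‖_F², and (ii) for every s×s orthogonal projection matrix Q with rank(Q) ≤ k, ‖(SA)ᵀ(I−Q)‖_F² ≤ ‖Tᵀ(SA)ᵀ(I−Q)‖_F² ≤ (1+ε)‖(SA)ᵀ(I−Q)‖_F². Then res_k(A)² ≤ res_k(SAT)² ≤ (1+ε)²·res_k(A)². (This is the deterministic core of the paper's upper-bound theorem: if S and Tᵀ are rank-k projection-cost preserving sketches, then the rank-k residual of the bilinear sketch SAT approximates the rank-k residual of A.) -/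

import Mathlib

open Matrix
open scoped RealInnerProductSpace


/-- Squared Frobenius norm of a real matrix. -/
noncomputable def frobSq {n d : ℕ} (M : Matrix (Fin n) (Fin d) ℝ) : ℝ :=
  ∑ i, ∑ j, (M i j) ^ 2

/-- An orthogonal projection matrix: symmetric and idempotent. -/
def IsOrthProj {d : ℕ} (P : Matrix (Fin d) (Fin d) ℝ) : Prop :=
  P.transpose = P ∧ P * P = P

/-- Squared rank-`k` residual error: infimum of `‖M - B‖_F²` over matrices `B` of rank `≤ k`. -/
noncomputable def resSq {n d : ℕ} (k : ℕ) (M : Matrix (Fin n) (Fin d) ℝ) : ℝ :=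
  sInf {x : ℝ | ∃ B : Matrix (Fin n) (Fin d) ℝ, B.rank ≤ k ∧ x = frobSq (M - B)}

lemma frobSq_nonneg {n d : ℕ} (M : Matrix (Fin n) (Fin d) ℝ) : 0 ≤ frobSq M := by
  unfold frobSq; positivity

lemma frobSq_eq_trace {n d : ℕ} (M : Matrix (Fin n) (Fin d) ℝ) :
    frobSq M = Matrix.trace (M * Mᵀ) := by
  simp [frobSq, Matrix.trace, Matrix.diag, Matrix.mul_apply, sq]

lemma frobSq_proj_le {n d : ℕ} (X : Matrix (Fin n) (Fin d) ℝ) {P : Matrix (Fin d) (Fin d) ℝ}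
    (hP : IsOrthProj P) : frobSq (X * (1 - P)) ≤ frobSq X := by
  obtain ⟨hs, hi⟩ := hP
  have hzero : (X * P) * (X * (1 - P))ᵀ = 0 := by
    have h1 : P * (1 - P)ᵀ = 0 := by
      rw [transpose_sub, transpose_one, hs, mul_sub, mul_one, hi, sub_self]
    calc (X * P) * (X * (1 - P))ᵀ = X * (P * (1 - P)ᵀ) * Xᵀ := by
          rw [Matrix.transpose_mul]
          simp only [Matrix.mul_assoc]
      _ = 0 := by rw [h1]; simp
  have hzt : (X * (1 - P)) * (X * P)ᵀ = 0 := by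
    have := congrArg Matrix.transpose hzero
    simpa [Matrix.transpose_mul] using this
  have key : frobSq X = frobSq (X * P) + frobSq (X * (1 - P)) := by
    have hdecomp : X = X * P + X * (1 - P) := by
      rw [Matrix.mul_sub, Matrix.mul_one]; abel
    rw [frobSq_eq_trace, frobSq_eq_trace, frobSq_eq_trace]
    conv_lhs => rw [hdecomp]
    rw [Matrix.transpose_add, Matrix.add_mul, Matrix.mul_add, Matrix.mul_add,
      hzero, hzt]
    simp [Matrix.trace_add]
  linarith [frobSq_nonneg (X * P)]

lemma frobSq_transpose {n d : ℕ} (M : Matrix (Fin n) (Fin d) ℝ) :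
    frobSq Mᵀ = frobSq M := by
  unfold frobSq
  simp only [Matrix.transpose_apply]
  rw [Finset.sum_comm]

lemma exists_rowspace_proj {m d : ℕ} (B : Matrix (Fin m) (Fin d) ℝ) :
    ∃ P : Matrix (Fin d) (Fin d) ℝ, IsOrthProj P ∧ P.rank ≤ B.rank ∧ B * P = B := by
  classical
  set e : EuclideanSpace ℝ (Fin d) ≃ₗ[ℝ] (Fin d → ℝ) := WithLp.linearEquiv 2 ℝ (Fin d → ℝ) with he
  set U' : Submodule ℝ (Fin d → ℝ) := Submodule.span ℝ (Set.range B) with hU'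
  set U : Submodule ℝ (EuclideanSpace ℝ (Fin d)) := U'.comap e.toLinearMap with hU
  set f : EuclideanSpace ℝ (Fin d) →ₗ[ℝ] EuclideanSpace ℝ (Fin d) :=
    U.subtype.comp (U.orthogonalProjectionOnto).toLinearMap with hf
  have hmemU : ∀ x, f x ∈ U := fun x => (U.orthogonalProjectionOnto x).2
  have hfix : ∀ x ∈ U, f x = x := by
    intro x hx
    have h := Submodule.orthogonalProjectionOnto_mem_subspace_eq_self (K := U) ⟨x, hx⟩
    simpa [hf] using congrArg Subtype.val h
  have hsym : ∀ x y : EuclideanSpace ℝ (Fin d), (inner ℝ (f x) (y) : ℝ) = (inner ℝ (x) (f y) : ℝ) := fun x y =>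
    U.inner_starProjection_left_eq_right x y
  set P : Matrix (Fin d) (Fin d) ℝ := Matrix.of (fun i j => f (EuclideanSpace.single j 1) i)
    with hPdef
  have hentry : ∀ (x : EuclideanSpace ℝ (Fin d)) (j : Fin d),
      (inner ℝ (x) (EuclideanSpace.single j (1 : ℝ)) : ℝ) = x j := by
    intro x j
    rw [EuclideanSpace.inner_single_right]
    simp
  have hPsym' : ∀ i j, P j i = P i j := by
    intro i j
    calc P j i = (inner ℝ (f (EuclideanSpace.single i 1)) (EuclideanSpace.single j (1:ℝ)) : ℝ) :=
          (hentry (f (EuclideanSpace.single i 1)) j).symm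
      _ = (inner ℝ (EuclideanSpace.single i 1) (f (EuclideanSpace.single j 1)) : ℝ) := hsym _ _
      _ = (inner ℝ (f (EuclideanSpace.single j 1)) (EuclideanSpace.single i (1:ℝ)) : ℝ) := real_inner_comm _ _
      _ = P i j := hentry (f (EuclideanSpace.single j 1)) i
  have hPsym : Pᵀ = P := by
    ext i j; exact hPsym' i j
  -- row computation: (X * P) i j = f (e.symm (X i)) j
  have hrow : ∀ (m' : ℕ) (X : Matrix (Fin m') (Fin d) ℝ) (i : Fin m') (j : Fin d),
      (X * P) i j = f (e.symm (X i)) j := by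
    intro m' X i j
    have h1 : (X * P) i j = (inner ℝ (e.symm (X i)) (f (EuclideanSpace.single j 1)) : ℝ) := by
      rw [Matrix.mul_apply, PiLp.inner_apply]
      refine Finset.sum_congr rfl fun l _ => ?_
      simp [he, hPdef, WithLp.linearEquiv_symm_apply, mul_comm]
    rw [h1, ← hsym]
    exact hentry (f (e.symm (X i))) j
  have hBmem : ∀ i : Fin m, e.symm (B i) ∈ U := by
    intro i
    have : (B i) ∈ U' := Submodule.subset_span ⟨i, rfl⟩
    simpa [hU, Submodule.mem_comap] using this
  have hBP : B * P = B := by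
    ext i j
    rw [hrow m B i j, hfix _ (hBmem i)]
    simp [he, WithLp.linearEquiv_symm_apply]
  have hProwi : ∀ i : Fin d, e.symm (P i) = f (EuclideanSpace.single i 1) := by
    intro i
    apply e.injective
    rw [e.apply_symm_apply]
    funext l
    have : (e (f (EuclideanSpace.single i 1))) l = f (EuclideanSpace.single i 1) l := rfl
    rw [this]
    exact (hPsym' i l).symm ▸ rfl
  have hPP : P * P = P := by
    ext i j
    rw [hrow d P i j, hProwi i, hfix _ (hmemU _)]
    exact (hPsym' i j).symm ▸ rfl
  -- rank bound
  have hmv : ∀ (v : Fin d → ℝ) (i : Fin d), P.mulVec v i = f (e.symm v) i := by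
    intro v i
    have h1 : f (e.symm v) i = (inner ℝ (e.symm v) (f (EuclideanSpace.single i 1)) : ℝ) := by
      rw [← hsym]
      exact (hentry (f (e.symm v)) i).symm
    rw [h1, PiLp.inner_apply, Matrix.mulVec, dotProduct]
    refine Finset.sum_congr rfl fun j _ => ?_
    have h2 : (e.symm v) j = v j := rfl
    have h3 : (f (EuclideanSpace.single i 1)) j = P i j := hPsym' j i ▸ rfl
    simp [h2, h3, mul_comm]
  have hrange : LinearMap.range P.mulVecLin ≤ U' := by
    rintro x ⟨v, rfl⟩
    have hx : P.mulVecLin v = e (f (e.symm v)) := by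
      funext i
      exact hmv v i
    rw [hx]
    have := hmemU (e.symm v)
    simpa [hU, Submodule.mem_comap] using this
  have hArank : P.rank ≤ B.rank := by
    have h1 : P.rank ≤ Module.finrank ℝ U' := by
      have := Submodule.finrank_mono hrange
      simpa [Matrix.rank] using this
    have h2 : Module.finrank ℝ U' = B.rank := by
      rw [hU', Matrix.rank_eq_finrank_span_row, Matrix.row_def]
    omega
  exact ⟨P, ⟨hPsym, hPP⟩, hArank, hBP⟩

lemma resSet_nonempty {n d : ℕ} (k : ℕ) (M : Matrix (Fin n) (Fin d) ℝ) :
    Set.Nonempty {x : ℝ | ∃ B : Matrix (Fin n) (Fin d) ℝ, B.rank ≤ k ∧ x = frobSq (M - B)} :=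
  ⟨frobSq M, 0, by simp [Matrix.rank_zero], by rw [sub_zero]⟩

lemma resSet_bdd {n d : ℕ} (k : ℕ) (M : Matrix (Fin n) (Fin d) ℝ) :
    BddBelow {x : ℝ | ∃ B : Matrix (Fin n) (Fin d) ℝ, B.rank ≤ k ∧ x = frobSq (M - B)} :=
  ⟨0, by rintro x ⟨B, -, rfl⟩; exact frobSq_nonneg _⟩

lemma resSq_le_frob {n d : ℕ} {k : ℕ} (M : Matrix (Fin n) (Fin d) ℝ)
    {B : Matrix (Fin n) (Fin d) ℝ} (hB : B.rank ≤ k) : resSq k M ≤ frobSq (M - B) :=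
  csInf_le (resSet_bdd k M) ⟨B, hB, rfl⟩

lemma resSq_le_proj {n d : ℕ} {k : ℕ} (M : Matrix (Fin n) (Fin d) ℝ)
    {P : Matrix (Fin d) (Fin d) ℝ} (hP : IsOrthProj P) (hr : P.rank ≤ k) :
    resSq k M ≤ frobSq (M * (1 - P)) := by
  have h1 : M * (1 - P) = M - M * P := by rw [Matrix.mul_sub, Matrix.mul_one]
  rw [h1]
  exact resSq_le_frob M ((Matrix.rank_mul_le_right M P).trans hr)

lemma frobSq_proj_le_sub {a b : ℕ} (X B : Matrix (Fin a) (Fin b) ℝ)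
    {P : Matrix (Fin b) (Fin b) ℝ} (hP : IsOrthProj P) (hBP : B * P = B) :
    frobSq (X * (1 - P)) ≤ frobSq (X - B) := by
  have h1 : X * (1 - P) = (X - B) * (1 - P) := by
    rw [Matrix.sub_mul]
    have h2 : B * (1 - P) = 0 := by rw [Matrix.mul_sub, Matrix.mul_one, hBP, sub_self]
    rw [h2, sub_zero]
  rw [h1]
  exact frobSq_proj_le _ hP

lemma sketch_step {n' m' d' : ℕ} {k : ℕ} {c : ℝ} (hc : 1 ≤ c)
    (M : Matrix (Fin n') (Fin d') ℝ) (N : Matrix (Fin m') (Fin d') ℝ)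
    (h : ∀ P : Matrix (Fin d') (Fin d') ℝ, IsOrthProj P → P.rank ≤ k →
      frobSq (M * (1 - P)) ≤ frobSq (N * (1 - P)) ∧
      frobSq (N * (1 - P)) ≤ c * frobSq (M * (1 - P))) :
    resSq k M ≤ resSq k N ∧ resSq k N ≤ c * resSq k M := by
  have hc0 : (0 : ℝ) < c := lt_of_lt_of_le one_pos hc
  constructor
  · apply le_csInf (resSet_nonempty k N)
    rintro x ⟨B, hB, rfl⟩
    obtain ⟨P, hP, hPr, hBP⟩ := exists_rowspace_proj B
    have hPk := hPr.trans hB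
    calc resSq k M ≤ frobSq (M * (1 - P)) := resSq_le_proj M hP hPk
      _ ≤ frobSq (N * (1 - P)) := (h P hP hPk).1
      _ ≤ frobSq (N - B) := frobSq_proj_le_sub N B hP hBP
  · apply le_of_forall_pos_le_add
    intro δ hδ
    have hlt : resSq k M < resSq k M + δ / c := by
      have : 0 < δ / c := div_pos hδ hc0
      linarith
    obtain ⟨x, ⟨B, hB, rfl⟩, hx⟩ := exists_lt_of_csInf_lt (resSet_nonempty k M) hlt
    obtain ⟨P, hP, hPr, hBP⟩ := exists_rowspace_proj B
    have hPk := hPr.trans hB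
    have h2 : frobSq (M * (1 - P)) ≤ frobSq (M - B) := frobSq_proj_le_sub M B hP hBP
    have h3 : resSq k N ≤ c * frobSq (M * (1 - P)) :=
      (resSq_le_proj N hP hPk).trans (h P hP hPk).2
    have h4 : c * frobSq (M * (1 - P)) ≤ c * (resSq k M + δ / c) :=
      mul_le_mul_of_nonneg_left (h2.trans hx.le) hc0.le
    have h5 : c * (resSq k M + δ / c) = c * resSq k M + δ := by
      field_simp
    linarith

lemma resSq_transpose {n' d' : ℕ} (k : ℕ) (M : Matrix (Fin n') (Fin d') ℝ) :
    resSq k Mᵀ = resSq k M := by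
  unfold resSq
  congr 1
  ext x
  simp only [Set.mem_setOf_eq]
  constructor
  · rintro ⟨B, hB, rfl⟩
    exact ⟨Bᵀ, by rw [Matrix.rank_transpose]; exact hB,
      by rw [← frobSq_transpose (M - Bᵀ), Matrix.transpose_sub, Matrix.transpose_transpose]⟩
  · rintro ⟨B, hB, rfl⟩
    exact ⟨Bᵀ, by rw [Matrix.rank_transpose]; exact hB,
      by rw [← Matrix.transpose_sub, frobSq_transpose]⟩

theorem bilinear_sketch_preserves_residual {n d s t : ℕ}
    (A : Matrix (Fin n) (Fin d) ℝ) (S : Matrix (Fin s) (Fin n) ℝ)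
    (T : Matrix (Fin d) (Fin t) ℝ) (ε : ℝ) (hε : 0 ≤ ε) (k : ℕ)
    (hS : ∀ P : Matrix (Fin d) (Fin d) ℝ, IsOrthProj P → P.rank ≤ k →
      frobSq (A * (1 - P)) ≤ frobSq (S * A * (1 - P)) ∧
      frobSq (S * A * (1 - P)) ≤ (1 + ε) * frobSq (A * (1 - P)))
    (hT : ∀ Q : Matrix (Fin s) (Fin s) ℝ, IsOrthProj Q → Q.rank ≤ k →
      frobSq ((S * A).transpose * (1 - Q)) ≤
        frobSq (T.transpose * (S * A).transpose * (1 - Q)) ∧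
      frobSq (T.transpose * (S * A).transpose * (1 - Q)) ≤
        (1 + ε) * frobSq ((S * A).transpose * (1 - Q))) :
    resSq k A ≤ resSq k (S * A * T) ∧
    resSq k (S * A * T) ≤ (1 + ε) ^ 2 * resSq k A := by
  have hc : (1 : ℝ) ≤ 1 + ε := by linarith
  have step1 := sketch_step hc A (S * A) hS
  have step2 := sketch_step hc (S * A)ᵀ (Tᵀ * (S * A)ᵀ) hT
  have htr : resSq k (S * A * T) = resSq k (Tᵀ * (S * A)ᵀ) := by
    rw [← resSq_transpose k (S * A * T), Matrix.transpose_mul]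
  have htr2 : resSq k ((S * A)ᵀ) = resSq k (S * A) := resSq_transpose k (S * A)
  have hA0 : 0 ≤ resSq k A :=
    le_csInf (resSet_nonempty k A) (by rintro x ⟨B, -, rfl⟩; exact frobSq_nonneg _)
  constructor
  · calc resSq k A ≤ resSq k (S * A) := step1.1
      _ = resSq k ((S * A)ᵀ) := htr2.symm
      _ ≤ resSq k (Tᵀ * (S * A)ᵀ) := step2.1
      _ = resSq k (S * A * T) := htr.symm
  · calc resSq k (S * A * T) = resSq k (Tᵀ * (S * A)ᵀ) := htr
      _ ≤ (1 + ε) * resSq k ((S * A)ᵀ) := step2.2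
      _ = (1 + ε) * resSq k (S * A) := by rw [htr2]
      _ ≤ (1 + ε) * ((1 + ε) * resSq k A) :=
        mul_le_mul_of_nonneg_left step1.2 (by linarith)
      _ = (1 + ε) ^ 2 * resSq k A := by ring
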